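/- arXiv:1603.08905 — 7 statements merged into one kernel-verified Lean document; each statement's English description precedes it below -/
import Mathlib

section
/- For the problem with P(z,λ) = i(z−λ) and boundary points a = −1, b = 1, the critical curves Re ∫_λ^{−1} √(i(ζ−λ)) dζ = 0 and Re ∫_λ^{1} √(i(ζ−λ)) dζ = 0 intersect at the point λ = −i/√3. -/
open Complex Real

lemma key (θ : ℝ) (hθ1 : -π < θ) (hθ2 : θ ≤ π) (r : ℝ) (hr : 0 < r)
    (h : Real.cos (π/4 + 3/2*θ) = 0) :
    (((2/3 : ℂ)) * Complex.exp (π / 4 * Complex.I) *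
      (((r : ℂ) * (Real.cos θ + Real.sin θ * Complex.I)) ^ ((3 : ℂ)/2))).re = 0 := by
  set z : ℂ := (r : ℂ) * (Real.cos θ + Real.sin θ * Complex.I) with hz
  have habs : ‖z‖ = r := by
    rw [hz, norm_mul, Complex.ofReal_cos, Complex.ofReal_sin,
      Complex.norm_cos_add_sin_mul_I, Complex.norm_real, Real.norm_eq_abs, abs_of_pos hr, mul_one]
  have hzne : z ≠ 0 := by
    intro h0
    rw [h0] at habs; simp at habs; exact hr.ne' habs.symm
  have harg : Complex.arg z = θ := by
    rw [hz, Complex.arg_real_mul _ hr, Complex.ofReal_cos, Complex.ofReal_sin,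
      Complex.arg_cos_add_sin_mul_I ⟨hθ1, hθ2⟩]
  rw [Complex.cpow_def_of_ne_zero hzne, mul_assoc, ← Complex.exp_add]
  rw [show (2/3 : ℂ) = ((2/3 : ℝ) : ℂ) by norm_num]
  rw [Complex.re_ofReal_mul, Complex.exp_re]
  have him : (↑π / 4 * Complex.I + Complex.log z * (3/2)).im = π/4 + 3/2*θ := by
    simp [Complex.log_im, harg]
    ring
  rw [him, h]
  ring

/-- For `P(z,λ) = i(z−λ)` with boundary points `a = −1`, `b = 1`, the
point `λ = −i/√3` lies on both critical curves `Re C(±1, λ) = 0`, where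
`C(c,λ) = ∫_λ^c √(i(ζ−λ)) dζ = (2/3)e^{iπ/4}(c−λ)^{3/2}` (principal powers). -/
theorem stmt2 :
    (((2/3 : ℂ) * Complex.exp (Real.pi / 4 * Complex.I) *
        ((-1 : ℂ) - (-Complex.I / Real.sqrt 3)) ^ ((3 : ℂ)/2)).re = 0) ∧
    (((2/3 : ℂ) * Complex.exp (Real.pi / 4 * Complex.I) *
        ((1 : ℂ) - (-Complex.I / Real.sqrt 3)) ^ ((3 : ℂ)/2)).re = 0) := by
  have h3 : (0:ℝ) < Real.sqrt 3 := by positivity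
  have hr : (0:ℝ) < 2 / Real.sqrt 3 := by positivity
  have hs : (Real.sqrt 3 : ℝ) * Real.sqrt 3 = 3 :=
    Real.mul_self_sqrt (by norm_num)
  constructor
  · have heq : ((-1 : ℂ) - (-Complex.I / Real.sqrt 3))
        = ((2 / Real.sqrt 3 : ℝ) : ℂ) * (Real.cos (5*π/6) + Real.sin (5*π/6) * Complex.I) := by
      have hc : Real.cos (5*π/6) = -(Real.sqrt 3/2) := by
        rw [show (5*π/6 : ℝ) = π - π/6 by ring, Real.cos_pi_sub, Real.cos_pi_div_six]
      have hsin : Real.sin (5*π/6) = 1/2 := by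
        rw [show (5*π/6 : ℝ) = π - π/6 by ring, Real.sin_pi_sub, Real.sin_pi_div_six]
      rw [hc, hsin]
      apply Complex.ext <;> simp <;> field_simp
    rw [heq]
    apply key _ (by nlinarith [Real.pi_pos]) (by nlinarith [Real.pi_pos]) _ hr
    rw [show (π/4 + 3/2*(5*π/6) : ℝ) = π + π/2 by ring, Real.cos_add]
    simp
  · have heq : ((1 : ℂ) - (-Complex.I / Real.sqrt 3))
        = ((2 / Real.sqrt 3 : ℝ) : ℂ) * (Real.cos (π/6) + Real.sin (π/6) * Complex.I) := by
      rw [Real.cos_pi_div_six, Real.sin_pi_div_six]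
      apply Complex.ext <;> simp <;> field_simp
    rw [heq]
    apply key _ (by nlinarith [Real.pi_pos]) (by nlinarith [Real.pi_pos]) _ hr
    rw [show (π/4 + 3/2*(π/6) : ℝ) = π/2 by ring]
    simp
end

section
/- For λ = −it with t > 1/√3, one has Re[(2/3)e^{iπ/4}(1−λ)^{3/2}] = Re[(2/3)e^{iπ/4}(−1−λ)^{3/2}], i.e., every point of the ray (−i/√3, −i∞) lies on the balanced curve for boundary points ±1. -/
open Complex Real

lemma aux_conj_num : (starRingEnd ℂ) ((2:ℂ)/3) = (2:ℂ)/3 :=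
  Complex.conj_eq_iff_im.mpr (by norm_num)

lemma aux_conj_num' : (starRingEnd ℂ) ((3:ℂ)/2) = (3:ℂ)/2 :=
  Complex.conj_eq_iff_im.mpr (by norm_num)

lemma aux_log (t : ℝ) (ht : 0 < t) :
    Complex.log ((-1 : ℂ) + Complex.I * t) =
      (starRingEnd ℂ) (Complex.log ((1 : ℂ) + Complex.I * t)) + Real.pi * Complex.I := by
  set z : ℂ := (1 : ℂ) + Complex.I * t with hz
  have him : z.im = t := by simp [hz]
  have hre : z.re = 1 := by simp [hz]
  have hback : (-1 : ℂ) + Complex.I * t = -((starRingEnd ℂ) z) := by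
    simp [hz, Complex.ext_iff]
  have himc : ((starRingEnd ℂ) z).im < 0 := by
    simp [Complex.conj_im, him]; exact ht
  have hargz_ne : z.arg ≠ Real.pi := by
    intro h
    have := Complex.arg_eq_pi_iff.mp h
    rw [hre] at this
    linarith [this.1]
  rw [hback, Complex.log, Complex.log, Complex.arg_neg_eq_arg_add_pi_of_im_neg himc]
  simp only [map_neg, norm_neg, Complex.norm_conj, Complex.arg_conj, if_neg hargz_ne, map_add, map_mul,
    Complex.conj_ofReal, Complex.conj_I, AbsoluteValue.map_neg]
  push_cast
  ring

lemma aux_exp_3pi2 : Complex.exp ((Real.pi : ℂ) * Complex.I * (3/2)) = -Complex.I := by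
  have h : ((Real.pi : ℂ) * Complex.I * (3/2)) =
      ((Real.pi : ℝ) : ℂ) * Complex.I + ((Real.pi / 2 : ℝ) : ℂ) * Complex.I := by
    push_cast; ring
  rw [h, Complex.exp_add, Complex.exp_mul_I, Complex.exp_mul_I]
  push_cast
  rw [Complex.cos_pi, Complex.sin_pi, Complex.cos_pi_div_two, Complex.sin_pi_div_two]
  ring

lemma aux_exp_conj_quarter :
    Complex.exp ((starRingEnd ℂ) ((Real.pi : ℂ) / 4 * Complex.I)) =
      Complex.exp ((Real.pi : ℂ) / 4 * Complex.I) * (-Complex.I) := by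
  have h : (starRingEnd ℂ) ((Real.pi : ℂ) / 4 * Complex.I) =
      (Real.pi : ℂ) / 4 * Complex.I + ((-(Real.pi) / 2 : ℝ) : ℂ) * Complex.I := by
    simp only [map_mul, map_div₀, Complex.conj_I, Complex.conj_ofReal, map_ofNat]
    push_cast
    ring
  rw [h, Complex.exp_add]
  congr 1
  rw [Complex.exp_mul_I]
  push_cast
  rw [neg_div, Complex.cos_neg, Complex.sin_neg, Complex.cos_pi_div_two,
    Complex.sin_pi_div_two]
  ring

/-- For `λ = −it` with `t > 1/√3` one has
`Re[(2/3)e^{iπ/4}(1−λ)^{3/2}] = Re[(2/3)e^{iπ/4}(−1−λ)^{3/2}]`, i.e. every point of the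
ray `(−i/√3, −i∞)` lies on the balanced curve for the boundary points `±1`. -/
theorem stmt3 (t : ℝ) (ht : 1 / Real.sqrt 3 < t) :
    ((2/3 : ℂ) * Complex.exp (Real.pi / 4 * Complex.I) *
        ((1 : ℂ) - (-Complex.I * t)) ^ ((3 : ℂ)/2)).re =
    ((2/3 : ℂ) * Complex.exp (Real.pi / 4 * Complex.I) *
        ((-1 : ℂ) - (-Complex.I * t)) ^ ((3 : ℂ)/2)).re := by
  have ht0 : 0 < t := lt_trans (by positivity) ht
  have h1 : ((1 : ℂ) - (-Complex.I * t)) = (1 : ℂ) + Complex.I * t := by ring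
  have h2 : ((-1 : ℂ) - (-Complex.I * t)) = (-1 : ℂ) + Complex.I * t := by ring
  rw [h1, h2]
  set z : ℂ := (1 : ℂ) + Complex.I * t with hz
  set w : ℂ := (-1 : ℂ) + Complex.I * t with hw
  have hzne : z ≠ 0 := by
    intro h
    have : z.re = 0 := by rw [h]; simp
    simp [hz] at this
  have hwne : w ≠ 0 := by
    intro h
    have : w.re = 0 := by rw [h]; simp
    simp [hw] at this
  -- key identity: the RHS term is the conjugate of the LHS term
  have key : (2/3 : ℂ) * Complex.exp (Real.pi / 4 * Complex.I) * w ^ ((3 : ℂ)/2) =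
      (starRingEnd ℂ) ((2/3 : ℂ) * Complex.exp (Real.pi / 4 * Complex.I) * z ^ ((3 : ℂ)/2)) := by
    rw [Complex.cpow_def_of_ne_zero hwne, Complex.cpow_def_of_ne_zero hzne,
      aux_log t ht0, map_mul, map_mul, ← Complex.exp_conj, ← Complex.exp_conj]
    have e1 : Complex.exp (((starRingEnd ℂ) (Complex.log z) + Real.pi * Complex.I) * (3/2)) =
        Complex.exp ((starRingEnd ℂ) (Complex.log z) * (3/2)) *
          Complex.exp (Real.pi * Complex.I * (3/2)) := by
      rw [← Complex.exp_add]; ring_nf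
    have e5 : (starRingEnd ℂ) (Complex.log z * (3/2)) =
        (starRingEnd ℂ) (Complex.log z) * (3/2) := by
      rw [map_mul, aux_conj_num']
    rw [e1, aux_exp_3pi2, aux_exp_conj_quarter, aux_conj_num, e5]
    ring
  rw [key, Complex.conj_re]
end

section
/- For P(z,λ) = i(z² − z/2 − λ) with turning points z₁, z₂, the integral ∫_{z₁}^{z₂} (i(ζ−z₁)(ζ−z₂))^{1/2} dζ has zero real part if and only if Im[e^{iπ/4}(z₂ − z₁)²] = 0, which is equivalent to Im λ + Re λ + 1/16 = 0. -/
open Complex Real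

lemma stmt5_half_sq (x : ℂ) : (x ^ ((1:ℂ)/2)) ^ 2 = x := by
  have h := Complex.cpow_nat_inv_pow x (n := 2) (by norm_num)
  have h2 : ((2:ℕ):ℂ)⁻¹ = (1:ℂ)/2 := by push_cast; ring
  rw [h2] at h
  exact_mod_cast h

/-- For `P(z,λ) = i(z² − z/2 − λ)` with turning points
`z₁, z₂ = 1/4 ∓ √(1/16+λ)`, and any continuous branch `g` of
`√(i(ζ−z₁)(ζ−z₂))` along the straight segment from `z₁` to `z₂`, the integral
`∫_{z₁}^{z₂} g` has zero real part iff `Im[e^{iπ/4}(z₂−z₁)²] = 0`, which is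
equivalent to `Im λ + Re λ + 1/16 = 0`. -/
theorem stmt5 (lam : ℂ)
    (z₁ z₂ : ℂ)
    (hz₁ : z₁ = (1/4 : ℂ) - ((1/16 : ℂ) + lam) ^ ((1 : ℂ)/2))
    (hz₂ : z₂ = (1/4 : ℂ) + ((1/16 : ℂ) + lam) ^ ((1 : ℂ)/2))
    (g : ℝ → ℂ) (hg : ContinuousOn g (Set.Icc 0 1))
    (hbranch : ∀ t ∈ Set.Icc (0:ℝ) 1,
      (g t) ^ 2 = Complex.I * ((z₁ + (t:ℂ) * (z₂ - z₁)) - z₁) *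
        ((z₁ + (t:ℂ) * (z₂ - z₁)) - z₂)) :
    ((∫ t in (0:ℝ)..1, g t * (z₂ - z₁)).re = 0 ↔
      (Complex.exp (Real.pi / 4 * Complex.I) * (z₂ - z₁) ^ 2).im = 0) ∧
    ((Complex.exp (Real.pi / 4 * Complex.I) * (z₂ - z₁) ^ 2).im = 0 ↔
      lam.im + lam.re + 1/16 = 0) := by
  set w : ℂ := z₂ - z₁ with hw
  set μ : ℂ := (1/16 : ℂ) + lam with hμ
  set e : ℂ := Complex.exp (Real.pi / 4 * Complex.I) with he
  have hr2 : (μ ^ ((1:ℂ)/2)) ^ 2 = μ := stmt5_half_sq μ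
  have hwr : w = 2 * μ ^ ((1:ℂ)/2) := by rw [hw, hz₁, hz₂]; ring
  have hw2 : w ^ 2 = 4 * μ := by rw [hwr, mul_pow, hr2]; ring
  have hecast : (Real.pi : ℂ) / 4 * Complex.I = ((Real.pi/4 : ℝ) : ℂ) * Complex.I := by
    push_cast; ring
  have here : e.re = Real.sqrt 2 / 2 := by
    rw [he, hecast, Complex.exp_ofReal_mul_I_re, Real.cos_pi_div_four]
  have heim : e.im = Real.sqrt 2 / 2 := by
    rw [he, hecast, Complex.exp_ofReal_mul_I_im, Real.sin_pi_div_four]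
  have hs2pos : (0:ℝ) < Real.sqrt 2 := Real.sqrt_pos.mpr (by norm_num)
  -- second equivalence
  have second : (e * w ^ 2).im = 0 ↔ lam.im + lam.re + 1/16 = 0 := by
    have himval : (e * w ^ 2).im = 2 * Real.sqrt 2 * (lam.im + lam.re + 1/16) := by
      rw [hw2]
      have h1 : (4 * μ).re = 4 * (1/16 + lam.re) := by
        rw [hμ]; simp [Complex.add_re]
      have h2 : (4 * μ).im = 4 * lam.im := by
        rw [hμ]; simp [Complex.add_im]
      rw [Complex.mul_im, h1, h2, here, heim]; ring
    rw [himval, mul_eq_zero, mul_eq_zero]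
    constructor
    · rintro ((h | h) | h)
      · norm_num at h
      · exact absurd h hs2pos.ne'
      · exact h
    · intro h; exact Or.inr h
  refine ⟨?_, second⟩
  -- first equivalence
  by_cases hw0 : w = 0
  · rw [hw0]; simp
  · -- the branch
    set s : ℂ := (-Complex.I * w ^ 2) ^ ((1:ℂ)/2) with hs
    have hs2 : s ^ 2 = -Complex.I * w ^ 2 := stmt5_half_sq _
    have hbase : -Complex.I * w ^ 2 ≠ 0 := by
      simp [Complex.I_ne_zero, pow_eq_zero_iff, hw0]
    have hs0 : s ≠ 0 := by
      rw [hs, Ne, Complex.cpow_eq_zero_iff]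
      push_neg
      intro h; exact absurd h hbase
    set h : ℝ → ℂ := fun t => ((Real.sqrt (t * (1 - t)) : ℝ) : ℂ) * s with hh
    have hsq : ∀ t ∈ Set.Icc (0:ℝ) 1, g t ^ 2 = h t ^ 2 := by
      intro t ht
      have h1 := hbranch t ht
      have hnn : (0:ℝ) ≤ t * (1 - t) := by
        obtain ⟨ht0, ht1⟩ := ht
        nlinarith
      have h2 : h t ^ 2 = ((t * (1 - t) : ℝ) : ℂ) * (-Complex.I * w ^ 2) := by
        rw [hh]
        simp only [mul_pow, ← Complex.ofReal_pow, Real.sq_sqrt hnn, hs2]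
      rw [h1, h2]
      push_cast
      ring
    have pm : ∀ t ∈ Set.Icc (0:ℝ) 1, g t = h t ∨ g t = -h t := by
      intro t ht
      have := hsq t ht
      have hfac : (g t - h t) * (g t + h t) = 0 := by
        have : g t ^ 2 - h t ^ 2 = 0 := by rw [this]; ring
        linear_combination this
      rcases mul_eq_zero.mp hfac with h1 | h1
      · exact Or.inl (by linear_combination h1)
      · exact Or.inr (by linear_combination h1)
    have hne : ∀ t ∈ Set.Ioo (0:ℝ) 1, h t ≠ 0 := by
      intro t ht
      have hpos : 0 < t * (1 - t) := by obtain ⟨h1, h2⟩ := ht; nlinarith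
      rw [hh]
      simp only [mul_ne_zero_iff]
      exact ⟨by exact_mod_cast (Real.sqrt_pos.mpr hpos).ne', hs0⟩
    have hhcont : Continuous h := by
      rw [hh]
      exact (Complex.continuous_ofReal.comp
        (Real.continuous_sqrt.comp (continuous_id.mul (continuous_const.sub continuous_id)))).mul continuous_const
    -- dichotomy
    have dicho : (∀ t ∈ Set.Ioo (0:ℝ) 1, g t = h t) ∨
        (∀ t ∈ Set.Ioo (0:ℝ) 1, g t = -h t) := by
      by_contra hcon
      push_neg at hcon
      obtain ⟨⟨a, ha, hga⟩, b, hb, hgb⟩ := hcon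
      have hga' : g a = -h a := (pm a (Set.Ioo_subset_Icc_self ha)).resolve_left hga
      have hgb' : g b = h b := (pm b (Set.Ioo_subset_Icc_self hb)).resolve_right hgb
      set φ : ℝ → ℝ := fun t => (g t * (h t)⁻¹).re with hφ
      have hsub : Set.uIcc a b ⊆ Set.Ioo 0 1 :=
        Set.ordConnected_Ioo.uIcc_subset ha hb
      have hφcont : ContinuousOn φ (Set.uIcc a b) := by
        apply Complex.continuous_re.comp_continuousOn
        apply ContinuousOn.mul
        · exact hg.mono (hsub.trans Set.Ioo_subset_Icc_self)
        · exact ContinuousOn.inv₀ (hhcont.continuousOn) (fun t ht => hne t (hsub ht))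
      have φa : φ a = -1 := by
        rw [hφ]
        simp only [hga', neg_mul]
        rw [mul_inv_cancel₀ (hne a ha)]
        simp
      have φb : φ b = 1 := by
        rw [hφ]
        simp only [hgb']
        rw [mul_inv_cancel₀ (hne b hb)]
        simp
      have h0mem : (0:ℝ) ∈ Set.uIcc (φ a) (φ b) := by
        rw [φa, φb]
        rw [Set.mem_uIcc]
        norm_num
      obtain ⟨c, hc, hφc⟩ := intermediate_value_uIcc hφcont h0mem
      have hcI := hsub hc
      have hhc := hne c hcI
      rcases pm c (Set.Ioo_subset_Icc_self hcI) with h1 | h1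
      · rw [hφ] at hφc
        simp only [h1, mul_inv_cancel₀ hhc] at hφc
        norm_num at hφc
      · rw [hφ] at hφc
        simp only [h1, neg_mul, mul_inv_cancel₀ hhc] at hφc
        norm_num at hφc
    -- endpoints
    have hh0 : h 0 = 0 := by rw [hh]; simp
    have hh1 : h 1 = 0 := by rw [hh]; simp
    have hg0 : g 0 = 0 := by
      have h2 := hsq 0 (by norm_num)
      rw [hh0] at h2
      have h3 : g 0 ^ 2 = 0 := by rw [h2]; ring
      exact pow_eq_zero_iff (two_ne_zero) |>.mp h3
    have hg1 : g 1 = 0 := by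
      have h2 := hsq 1 (by norm_num)
      rw [hh1] at h2
      have h3 : g 1 ^ 2 = 0 := by rw [h2]; ring
      exact pow_eq_zero_iff (two_ne_zero) |>.mp h3
    obtain ⟨ε, hε, heq⟩ : ∃ ε : ℂ, (ε = 1 ∨ ε = -1) ∧
        ∀ t ∈ Set.Icc (0:ℝ) 1, g t = ε * h t := by
      rcases dicho with hd | hd
      · refine ⟨1, Or.inl rfl, fun t ht => ?_⟩
        rcases eq_or_lt_of_le ht.1 with h0 | h0
        · rw [← h0, hg0, hh0]; ring
        rcases eq_or_lt_of_le ht.2 with h1 | h1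
        · rw [h1, hg1, hh1]; ring
        · rw [hd t ⟨h0, h1⟩]; ring
      · refine ⟨-1, Or.inr rfl, fun t ht => ?_⟩
        rcases eq_or_lt_of_le ht.1 with h0 | h0
        · rw [← h0, hg0, hh0]; ring
        rcases eq_or_lt_of_le ht.2 with h1 | h1
        · rw [h1, hg1, hh1]; ring
        · rw [hd t ⟨h0, h1⟩]; ring
    -- compute the integral
    set C : ℝ := ∫ t in (0:ℝ)..1, Real.sqrt (t * (1 - t)) with hC
    have hCint : IntervalIntegrable (fun t => Real.sqrt (t * (1 - t))) MeasureTheory.volume 0 1 :=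
      (Real.continuous_sqrt.comp (continuous_id.mul (continuous_const.sub continuous_id))).intervalIntegrable 0 1
    have hCpos : 0 < C := by
      rw [hC]
      apply intervalIntegral.intervalIntegral_pos_of_pos_on hCint
      · intro t ht
        apply Real.sqrt_pos.mpr
        obtain ⟨h1, h2⟩ := ht
        nlinarith
      · norm_num
    have hint : (∫ t in (0:ℝ)..1, g t * w) = (ε * s * w) * (C : ℂ) := by
      have hEq : Set.EqOn (fun t => g t * w)
          (fun t => (ε * s * w) * ((Real.sqrt (t * (1 - t)) : ℝ) : ℂ)) (Set.uIcc 0 1) := by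
        intro t ht
        rw [Set.uIcc_of_le (by norm_num : (0:ℝ) ≤ 1)] at ht
        simp only
        rw [heq t ht, hh]
        ring
      rw [intervalIntegral.integral_congr hEq]
      rw [intervalIntegral.integral_const_mul]
      rw [intervalIntegral.integral_ofReal]
    -- relation e * w² = ± (s*w) * I
    have he2 : e ^ 2 = Complex.I := by
      rw [he, sq, ← Complex.exp_add]
      have harg : (Real.pi : ℂ) / 4 * Complex.I + (Real.pi : ℂ) / 4 * Complex.I
          = ((Real.pi / 2 : ℝ) : ℂ) * Complex.I := by push_cast; ring
      rw [harg, Complex.exp_mul_I]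
      simp [← Complex.ofReal_cos, ← Complex.ofReal_sin,
        Real.cos_pi_div_two, Real.sin_pi_div_two]
    have hsq2 : (s * w * e) ^ 2 = (w ^ 2) ^ 2 := by
      rw [mul_pow, mul_pow, hs2, he2]
      linear_combination (-(w ^ 2 * w ^ 2)) * Complex.I_sq
    have hpm2 : s * w * e = w ^ 2 ∨ s * w * e = -(w ^ 2) := by
      have hfac : (s * w * e - w ^ 2) * (s * w * e + w ^ 2) = 0 := by
        linear_combination hsq2
      rcases mul_eq_zero.mp hfac with h1 | h1
      · exact Or.inl (by linear_combination h1)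
      · exact Or.inr (by linear_combination h1)
    have hew : e * w ^ 2 = s * w * Complex.I ∨ e * w ^ 2 = -(s * w * Complex.I) := by
      rcases hpm2 with h1 | h1
      · left
        calc e * w ^ 2 = (s * w * e) * e := by rw [h1]; ring
        _ = s * w * Complex.I := by rw [mul_assoc, ← sq, he2]
      · right
        calc e * w ^ 2 = -((s * w * e) * e) := by rw [h1]; ring
        _ = -(s * w * Complex.I) := by rw [mul_assoc, ← sq, he2]
    -- conclude
    rw [hint]
    have hre : ((ε * s * w) * (C : ℂ)).re = (ε * s * w).re * C := by
      simp [Complex.mul_re, Complex.ofReal_re, Complex.ofReal_im]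
    rw [hre]
    have him : (e * w ^ 2).im = (s * w).re ∨ (e * w ^ 2).im = -(s * w).re := by
      rcases hew with h1 | h1
      · left; rw [h1, Complex.mul_I_im]
      · right; rw [h1, Complex.neg_im, Complex.mul_I_im]
    have habs : (ε * s * w).re = (s * w).re ∨ (ε * s * w).re = -(s * w).re := by
      rcases hε with hd | hd
      · left; rw [hd, one_mul]
      · right
        have hd2 : (-1 : ℂ) * s * w = -(s * w) := by ring
        rw [hd, hd2, Complex.neg_re]
    rcases habs with ha | ha <;> rcases him with hb | hb <;> rw [ha, hb] <;>
      constructor <;> intro hyp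
    all_goals first
      | exact mul_eq_zero.mpr (Or.inl (by linarith))
      | (have h2 := (mul_eq_zero.mp hyp).resolve_right hCpos.ne'; linarith)
end

section
/- If λ is an eigenvalue of the problem −y'' + k²i(z² − z/2 − λ)y = 0 on [−1,1] with y(−1) = y(1) = 0 and y ≢ 0, then Im λ = −(1/k²)·⟨y',y'⟩/⟨y,y⟩ < 0. -/
open Complex Real intervalIntegral

/-- If `λ` is an eigenvalue of `−y'' + k²i(x² − x/2 − λ)y = 0` on `[−1,1]`
with `y(±1) = 0` and `y ≢ 0`, then `Im λ = −(1/k²)⟨y',y'⟩/⟨y,y⟩ < 0`. -/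
theorem stmt7 (k : ℝ) (hk : 0 < k) (lam : ℂ)
    (y y' y'' : ℝ → ℂ)
    (hy' : ∀ x ∈ Set.Icc (-1:ℝ) 1, HasDerivAt y (y' x) x)
    (hy'' : ∀ x ∈ Set.Icc (-1:ℝ) 1, HasDerivAt y' (y'' x) x)
    (hcont : ContinuousOn y'' (Set.Icc (-1:ℝ) 1))
    (heq : ∀ x ∈ Set.Icc (-1:ℝ) 1,
      -y'' x + (k:ℂ)^2 * Complex.I * ((x:ℂ)^2 - (x:ℂ)/2 - lam) * y x = 0)
    (hbc : y (-1) = 0 ∧ y 1 = 0)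
    (hnt : ∃ x ∈ Set.Icc (-1:ℝ) 1, y x ≠ 0) :
    lam.im = -(1/k^2) * (∫ x in (-1:ℝ)..1, ‖y' x‖^2) / (∫ x in (-1:ℝ)..1, ‖y x‖^2) ∧
      lam.im < 0 := by
  obtain ⟨hbc1, hbc2⟩ := hbc
  have h11 : (-1:ℝ) ≤ 1 := by norm_num
  have huIcc : Set.uIcc (-1:ℝ) 1 = Set.Icc (-1:ℝ) 1 := Set.uIcc_of_le h11
  have hyc : ContinuousOn y (Set.Icc (-1:ℝ) 1) :=
    fun x hx => (hy' x hx).continuousAt.continuousWithinAt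
  have hy'c : ContinuousOn y' (Set.Icc (-1:ℝ) 1) :=
    fun x hx => (hy'' x hx).continuousAt.continuousWithinAt
  set A : ℝ := ∫ x in (-1:ℝ)..1, ‖y x‖^2 with hA
  set B : ℝ := ∫ x in (-1:ℝ)..1, ‖y' x‖^2 with hB
  -- integrabilities
  have hIy'' : IntervalIntegrable y'' MeasureTheory.volume (-1) 1 :=
    (hcont.mono (by rw [huIcc])).intervalIntegrable
  have hIy'c : IntervalIntegrable (fun x => (starRingEnd ℂ) (y' x)) MeasureTheory.volume (-1) 1 :=
    ((Complex.continuous_conj.comp_continuousOn hy'c).mono (by rw [huIcc])).intervalIntegrable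
  -- integration by parts
  have ibp := intervalIntegral.integral_mul_deriv_eq_deriv_mul
      (u := fun t => (starRingEnd ℂ) (y t)) (v := y')
      (u' := fun t => (starRingEnd ℂ) (y' t)) (v' := y'')
      (fun x hx => ((hy' x (huIcc ▸ hx)).star : _))
      (fun x hx => hy'' x (huIcc ▸ hx)) hIy'c hIy''
  simp only [hbc1, hbc2, map_zero, zero_mul, sub_zero, zero_sub] at ibp
  -- rewrite LHS using the ODE
  have hsq : ∀ z : ℂ, (starRingEnd ℂ) z * z = ((‖z‖^2 : ℝ) : ℂ) := by
    intro z; rw [mul_comm, Complex.mul_conj']; norm_cast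
  have hLHS : (∫ x in (-1:ℝ)..1, (starRingEnd ℂ) (y x) * y'' x)
      = ∫ x in (-1:ℝ)..1, (k:ℂ)^2 * Complex.I * ((x:ℂ)^2 - (x:ℂ)/2 - lam) * ((‖y x‖^2 : ℝ) : ℂ) := by
    refine intervalIntegral.integral_congr (fun x hx => ?_)
    have hx' : x ∈ Set.Icc (-1:ℝ) 1 := huIcc ▸ hx
    have hyy : y'' x = (k:ℂ)^2 * Complex.I * ((x:ℂ)^2 - (x:ℂ)/2 - lam) * y x := by
      linear_combination -heq x hx'
    rw [hyy, ← hsq (y x)]; ring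
  have hRHS : (∫ x in (-1:ℝ)..1, (starRingEnd ℂ) (y' x) * y' x) = ((B : ℝ) : ℂ) := by
    rw [hB]
    rw [show (fun x => (starRingEnd ℂ) (y' x) * y' x) = (fun x => ((‖y' x‖^2 : ℝ) : ℂ)) from
      funext fun x => hsq (y' x)]
    exact intervalIntegral.integral_ofReal
  rw [hLHS, hRHS] at ibp
  -- take real parts
  have hgint : IntervalIntegrable
      (fun x => (k:ℂ)^2 * Complex.I * ((x:ℂ)^2 - (x:ℂ)/2 - lam) * ((‖y x‖^2 : ℝ) : ℂ))
      MeasureTheory.volume (-1) 1 := by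
    apply ContinuousOn.intervalIntegrable
    rw [huIcc]
    have hpoly : Continuous fun x : ℝ => (k:ℂ)^2*Complex.I*((x:ℂ)^2-(x:ℂ)/2-lam) := by
      continuity
    exact hpoly.continuousOn.mul
      (Complex.continuous_ofReal.comp_continuousOn ((hyc.norm).pow 2))
  have hre := Complex.reCLM.intervalIntegral_comp_comm hgint
  simp only [Complex.reCLM_apply] at hre
  rw [ibp] at hre
  have h2 : (fun x : ℝ => ((k:ℂ)^2 * Complex.I * ((x:ℂ)^2-(x:ℂ)/2-lam) * ((‖y x‖^2:ℝ):ℂ)).re)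
      = fun x : ℝ => k^2*lam.im*(‖y x‖^2) := funext fun x => by
    simp [← Complex.ofReal_pow, Complex.mul_re, Complex.mul_im, Complex.ofReal_re,
      Complex.ofReal_im]
  rw [h2, intervalIntegral.integral_const_mul] at hre
  simp only [Complex.neg_re, Complex.ofReal_re] at hre
  -- hre : k^2 * lam.im * A = -B
  have hApos : 0 < A := by
    obtain ⟨x₀, hx₀, hne⟩ := hnt
    exact intervalIntegral.integral_pos (by norm_num) ((hyc.norm).pow 2)
      (fun x _ => sq_nonneg _) ⟨x₀, hx₀, pow_pos (norm_pos_iff.mpr hne) 2⟩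
  have hBpos : 0 < B := by
    have hexist : ∃ c ∈ Set.Icc (-1:ℝ) 1, y' c ≠ 0 := by
      by_contra h
      push_neg at h
      obtain ⟨x₀, hx₀, hne⟩ := hnt
      have hconst := constant_of_has_deriv_right_zero (f := y) (a := (-1:ℝ)) (b := 1) hyc
        (fun x hx => by
          have hd := hy' x (Set.mem_Icc.mpr ⟨hx.1, hx.2.le⟩)
          rw [h x ⟨hx.1, hx.2.le⟩] at hd
          exact hd.hasDerivWithinAt)
      have h0 := hconst x₀ hx₀
      rw [hbc1] at h0
      exact hne h0
    obtain ⟨c, hc, hne⟩ := hexist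
    exact intervalIntegral.integral_pos (by norm_num) ((hy'c.norm).pow 2)
      (fun x _ => sq_nonneg _) ⟨c, hc, pow_pos (norm_pos_iff.mpr hne) 2⟩
  have hk2 : k^2 ≠ 0 := by positivity
  have him : lam.im = -(1/k^2) * B / A := by
    field_simp
    linear_combination hre
  refine ⟨him, ?_⟩
  rw [him, show -(1/k^2) * B / A = -((1/k^2)*B/A) by ring]
  exact neg_lt_zero.mpr (by positivity)
end

section
/- If λ is an eigenvalue of the Couette model problem −y'' + k²i(z − λ)y = 0 on [−1,1] with Dirichlet boundary conditions, then Im λ < 0 and −1 ≤ Re λ ≤ 1. -/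
open Complex Real MeasureTheory intervalIntegral

lemma aux_pos {f : ℝ → ℝ} (hc : ContinuousOn f (Set.Icc (-1:ℝ) 1))
    (hnn : ∀ x ∈ Set.Icc (-1:ℝ) 1, 0 ≤ f x) {x0 : ℝ}
    (hx0 : x0 ∈ Set.Ioo (-1:ℝ) 1) (hpos : 0 < f x0) :
    0 < ∫ x in (-1:ℝ)..1, f x := by
  have hIcc : Set.Icc (-1:ℝ) 1 ∈ nhds x0 := Icc_mem_nhds hx0.1 hx0.2
  have hct : ContinuousAt f x0 :=
    (hc.continuousWithinAt (mem_of_mem_nhds hIcc)).continuousAt hIcc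
  have hnb : {x | f x0 / 2 < f x} ∈ nhds x0 := hct (Ioi_mem_nhds (half_lt_self hpos))
  obtain ⟨l, u, hlu, hsub⟩ := mem_nhds_iff_exists_Ioo_subset.mp hnb
  set a := max l (-1) with ha
  set b := min u 1 with hb
  have hax : a < x0 := max_lt hlu.1 hx0.1
  have hxb : x0 < b := lt_min hlu.2 hx0.2
  have hab : a ≤ b := le_of_lt (hax.trans hxb)
  have ha1 : (-1:ℝ) ≤ a := le_max_right _ _
  have hb1 : b ≤ 1 := min_le_right _ _
  have hsubI : Set.Icc a b ⊆ Set.Icc (-1:ℝ) 1 := Set.Icc_subset_Icc ha1 hb1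
  have hint : IntervalIntegrable f volume a b := by
    apply ContinuousOn.intervalIntegrable
    rw [Set.uIcc_of_le hab]
    exact hc.mono hsubI
  have hmid : 0 < ∫ x in a..b, f x := by
    apply intervalIntegral_pos_of_pos_on hint _ (hax.trans hxb)
    intro x hx
    have hxlu : x ∈ Set.Ioo l u :=
      ⟨lt_of_le_of_lt (le_max_left _ _) hx.1, lt_of_lt_of_le hx.2 (min_le_left _ _)⟩
    exact lt_trans (half_pos hpos) (hsub hxlu)
  have hintL : IntervalIntegrable f volume (-1) a := by
    apply ContinuousOn.intervalIntegrable
    rw [Set.uIcc_of_le ha1]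
    exact hc.mono (Set.Icc_subset_Icc le_rfl (hab.trans hb1))
  have hintR : IntervalIntegrable f volume b 1 := by
    apply ContinuousOn.intervalIntegrable
    rw [Set.uIcc_of_le hb1]
    exact hc.mono (Set.Icc_subset_Icc (ha1.trans hab) le_rfl)
  have hL : 0 ≤ ∫ x in (-1:ℝ)..a, f x :=
    intervalIntegral.integral_nonneg ha1 (fun u hu => hnn u ⟨hu.1, hu.2.trans (hab.trans hb1)⟩)
  have hR : 0 ≤ ∫ x in b..1, f x :=
    intervalIntegral.integral_nonneg hb1 (fun u hu => hnn u ⟨(ha1.trans hab |>.trans hu.1), hu.2⟩)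
  have hsplit : ∫ x in (-1:ℝ)..1, f x =
      (∫ x in (-1:ℝ)..a, f x) + ((∫ x in a..b, f x) + (∫ x in b..1, f x)) := by
    rw [intervalIntegral.integral_add_adjacent_intervals hint hintR,
      intervalIntegral.integral_add_adjacent_intervals hintL (hint.trans hintR)]
  linarith

/-- If `λ` is an eigenvalue of the Couette model problem
`−y'' + k²i(x − λ)y = 0` on `[−1,1]` with Dirichlet boundary conditions, then
`Im λ < 0` and `−1 ≤ Re λ ≤ 1`. -/
theorem stmt9 (k : ℝ) (hk : 0 < k) (lam : ℂ)
    (y y' y'' : ℝ → ℂ)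
    (hy' : ∀ x ∈ Set.Icc (-1:ℝ) 1, HasDerivAt y (y' x) x)
    (hy'' : ∀ x ∈ Set.Icc (-1:ℝ) 1, HasDerivAt y' (y'' x) x)
    (hcont : ContinuousOn y'' (Set.Icc (-1:ℝ) 1))
    (heq : ∀ x ∈ Set.Icc (-1:ℝ) 1,
      -y'' x + (k:ℂ)^2 * Complex.I * ((x:ℂ) - lam) * y x = 0)
    (hbc : y (-1) = 0 ∧ y 1 = 0)
    (hnt : ∃ x ∈ Set.Icc (-1:ℝ) 1, y x ≠ 0) :
    lam.im < 0 ∧ -1 ≤ lam.re ∧ lam.re ≤ 1 := by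
  obtain ⟨hbm, hbp⟩ := hbc
  have h11 : (-1:ℝ) ≤ 1 := by norm_num
  have huIcc : Set.uIcc (-1:ℝ) 1 = Set.Icc (-1:ℝ) 1 := Set.uIcc_of_le h11
  have hyc : ContinuousOn y (Set.Icc (-1:ℝ) 1) :=
    fun x hx => (hy' x hx).continuousAt.continuousWithinAt
  have hy'c : ContinuousOn y' (Set.Icc (-1:ℝ) 1) :=
    fun x hx => (hy'' x hx).continuousAt.continuousWithinAt
  have hFc : ContinuousOn (fun x => Complex.normSq (y x)) (Set.Icc (-1:ℝ) 1) :=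
    Complex.continuous_normSq.comp_continuousOn hyc
  have hGc : ContinuousOn (fun x => Complex.normSq (y' x)) (Set.Icc (-1:ℝ) 1) :=
    Complex.continuous_normSq.comp_continuousOn hy'c
  set B : ℝ := ∫ x in (-1:ℝ)..1, Complex.normSq (y x) with hBdef
  set C : ℝ := ∫ x in (-1:ℝ)..1, x * Complex.normSq (y x) with hCdef
  set A : ℝ := ∫ x in (-1:ℝ)..1, Complex.normSq (y' x) with hAdef
  -- integrability facts
  have hiF : IntervalIntegrable (fun x => Complex.normSq (y x)) volume (-1) 1 := by
    apply ContinuousOn.intervalIntegrable; rw [huIcc]; exact hFc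
  have hiXF : IntervalIntegrable (fun x => x * Complex.normSq (y x)) volume (-1) 1 := by
    apply ContinuousOn.intervalIntegrable; rw [huIcc]
    exact continuousOn_id.mul hFc
  have hi1 : IntervalIntegrable (fun x => y'' x * (starRingEnd ℂ) (y x)) volume (-1) 1 := by
    apply ContinuousOn.intervalIntegrable; rw [huIcc]
    exact hcont.mul (Complex.continuous_conj.comp_continuousOn hyc)
  have hi2 : IntervalIntegrable (fun x => y' x * (starRingEnd ℂ) (y' x)) volume (-1) 1 := by
    apply ContinuousOn.intervalIntegrable; rw [huIcc]
    exact hy'c.mul (Complex.continuous_conj.comp_continuousOn hy'c)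
  have hiCF : IntervalIntegrable (fun x => ((Complex.normSq (y x) : ℝ) : ℂ)) volume (-1) 1 := by
    apply ContinuousOn.intervalIntegrable; rw [huIcc]
    exact Complex.continuous_ofReal.comp_continuousOn hFc
  have hiCXF : IntervalIntegrable (fun x => ((x * Complex.normSq (y x) : ℝ) : ℂ)) volume (-1) 1 := by
    apply ContinuousOn.intervalIntegrable; rw [huIcc]
    exact Complex.continuous_ofReal.comp_continuousOn (continuousOn_id.mul hFc)
  -- integration by parts
  have hibp : (∫ x in (-1:ℝ)..1,
      (y'' x * (starRingEnd ℂ) (y x) + y' x * (starRingEnd ℂ) (y' x))) =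
      y' 1 * (starRingEnd ℂ) (y 1) - y' (-1) * (starRingEnd ℂ) (y (-1)) := by
    apply intervalIntegral.integral_eq_sub_of_hasDerivAt
      (f := fun x => y' x * (starRingEnd ℂ) (y x))
    · intro x hx
      rw [huIcc] at hx
      exact (hy'' x hx).mul ((hy' x hx).star)
    · exact hi1.add hi2
  have hibp0 : (∫ x in (-1:ℝ)..1,
      (y'' x * (starRingEnd ℂ) (y x) + y' x * (starRingEnd ℂ) (y' x))) = 0 := by
    rw [hibp, hbm, hbp]; simp
  have hA : (∫ x in (-1:ℝ)..1, y' x * (starRingEnd ℂ) (y' x)) = (A : ℂ) := by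
    rw [hAdef, ← intervalIntegral.integral_ofReal]
    apply intervalIntegral.integral_congr
    intro x _
    exact Complex.mul_conj _
  have hC2 : (∫ x in (-1:ℝ)..1, y'' x * (starRingEnd ℂ) (y x)) =
      (k:ℂ)^2 * Complex.I * ((C:ℂ) - lam * (B:ℂ)) := by
    have hco : ∀ x ∈ Set.uIcc (-1:ℝ) 1, y'' x * (starRingEnd ℂ) (y x) =
        (k:ℂ)^2 * Complex.I * (((x * Complex.normSq (y x) : ℝ) : ℂ)
          - lam * ((Complex.normSq (y x) : ℝ) : ℂ)) := by
      intro x hx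
      rw [huIcc] at hx
      have h0 := heq x hx
      have hy2 : y'' x = (k:ℂ)^2 * Complex.I * ((x:ℂ) - lam) * y x := by
        linear_combination -h0
      rw [hy2, mul_assoc, Complex.mul_conj]
      push_cast
      ring
    rw [intervalIntegral.integral_congr hco, intervalIntegral.integral_const_mul,
      intervalIntegral.integral_sub hiCXF (hiCF.const_mul lam),
      intervalIntegral.integral_const_mul, intervalIntegral.integral_ofReal,
      intervalIntegral.integral_ofReal]
  have hmain : (k:ℂ)^2 * Complex.I * ((C:ℂ) - lam * (B:ℂ)) + (A:ℂ) = 0 := by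
    rw [← hC2, ← hA, ← intervalIntegral.integral_add hi1 hi2]
    exact hibp0
  have hre := congrArg Complex.re hmain
  have him := congrArg Complex.im hmain
  simp [← Complex.ofReal_pow, Complex.add_re, Complex.add_im, Complex.mul_re, Complex.mul_im,
    Complex.sub_re, Complex.sub_im, Complex.I_re, Complex.I_im,
    Complex.ofReal_re, Complex.ofReal_im] at hre him
  -- positivity of B
  obtain ⟨x0, hx0, hy0⟩ := hnt
  have hx0o : x0 ∈ Set.Ioo (-1:ℝ) 1 := by
    refine ⟨lt_of_le_of_ne hx0.1 ?_, lt_of_le_of_ne hx0.2 ?_⟩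
    · intro h; exact hy0 (h ▸ hbm)
    · intro h; exact hy0 (h ▸ hbp)
  have hBpos : 0 < B :=
    aux_pos hFc (fun x _ => Complex.normSq_nonneg _) hx0o (Complex.normSq_pos.mpr hy0)
  -- bounds on C
  have hCle : C ≤ B := by
    apply intervalIntegral.integral_mono_on h11 hiXF hiF
    intro x hx
    nlinarith [Complex.normSq_nonneg (y x), hx.1, hx.2]
  have hCge : -B ≤ C := by
    rw [hBdef, ← intervalIntegral.integral_neg]
    apply intervalIntegral.integral_mono_on h11 hiF.neg hiXF
    intro x hx
    simp only [Pi.neg_apply]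
    nlinarith [Complex.normSq_nonneg (y x), hx.1, hx.2]
  -- positivity of A
  have hAnn : 0 ≤ A :=
    intervalIntegral.integral_nonneg h11 (fun x _ => Complex.normSq_nonneg _)
  have hApos : 0 < A := by
    rcases lt_or_eq_of_le hAnn with h | h
    · exact h
    have hA0 : A = 0 := h.symm
    exfalso
    have hzero : ∀ x ∈ Set.Ioo (-1:ℝ) 1, y' x = 0 := by
      intro x hx
      by_contra hne
      have := aux_pos hGc (fun x _ => Complex.normSq_nonneg _) hx (Complex.normSq_pos.mpr hne)
      rw [← hAdef] at this
      linarith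
    have hm1x0 : (-1:ℝ) ≤ x0 := hx0o.1.le
    have hftc : (∫ x in (-1:ℝ)..x0, y' x) = y x0 - y (-1) := by
      apply intervalIntegral.integral_eq_sub_of_hasDerivAt
      · intro x hx
        rw [Set.uIcc_of_le hm1x0] at hx
        exact hy' x ⟨hx.1, hx.2.trans hx0o.2.le⟩
      · apply ContinuousOn.intervalIntegrable
        rw [Set.uIcc_of_le hm1x0]
        exact hy'c.mono (Set.Icc_subset_Icc le_rfl hx0o.2.le)
    have hzero_int : (∫ x in (-1:ℝ)..x0, y' x) = 0 := by
      have hne_ae : ∀ᵐ x ∂(volume : Measure ℝ), x ≠ x0 := by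
        rw [ae_iff]
        have : {x : ℝ | ¬ x ≠ x0} = {x0} := by ext x; simp
        rw [this]
        exact measure_singleton x0
      have hae : ∀ᵐ x ∂(volume : Measure ℝ), x ∈ Set.uIoc (-1:ℝ) x0 → y' x = 0 := by
        filter_upwards [hne_ae] with x hxne hxin
        rw [Set.uIoc_of_le hm1x0] at hxin
        exact hzero x ⟨hxin.1, (lt_of_le_of_ne hxin.2 hxne).trans_le hx0o.2.le⟩
      calc (∫ x in (-1:ℝ)..x0, y' x) = ∫ _ in (-1:ℝ)..x0, (0:ℂ) :=
        intervalIntegral.integral_congr_ae hae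
      _ = 0 := by simp
    rw [hzero_int, hbm, sub_zero] at hftc
    exact hy0 hftc.symm
  have hk2 : (0:ℝ) < k^2 := pow_pos hk 2
  have hCB : C = lam.re * B := by
    rcases him with h | h
    · exact absurd h hk.ne'
    · linarith
  constructor
  · -- lam.im < 0
    by_contra h
    push_neg at h
    nlinarith [mul_nonneg (mul_nonneg hk2.le h) hBpos.le]
  constructor
  · nlinarith [hCge, hBpos]
  · nlinarith [hCle, hBpos]
end

section
/- Fix k > 0 and m ∈ ℤ, m ≥ 1. The equation k·∫_{−1}^{1} √(i(ζ−λ)) dζ = mπi, i.e., (2k/3)e^{iπ/4}[(1−λ)^{3/2} − (−1−λ)^{3/2}] = mπi, has at most one solution λ on the ray {−it : t > 1/√3}. -/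
open Complex Real

noncomputable def Gfun (t : ℝ) : ℝ :=
  Real.exp (3/4 * Real.log (1 + t^2)) *
    (Real.cos (3/2 * Real.arctan t) + Real.sin (3/2 * Real.arctan t))

lemma cpow_re_aux (z : ℂ) (hz : z ≠ 0) :
    (z ^ ((3:ℂ)/2)).re
      = Real.exp (Real.log ‖z‖ * (3/2)) * Real.cos (Complex.arg z * (3/2)) := by
  have h32 : ((3:ℂ)/2) = ((3/2 : ℝ) : ℂ) := by norm_num
  rw [Complex.cpow_def_of_ne_zero hz, Complex.exp_re, h32]
  simp [Complex.mul_re, Complex.mul_im, Complex.log_re, Complex.log_im]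

lemma abs_aux (t : ℝ) : ‖1 + Complex.I * t‖ = Real.sqrt (1 + t^2) := by
  rw [Complex.norm_def, Complex.normSq_apply]
  norm_num
  ring_nf

lemma abs_aux' (t : ℝ) : ‖-1 + Complex.I * t‖ = Real.sqrt (1 + t^2) := by
  rw [Complex.norm_def, Complex.normSq_apply]
  norm_num
  ring_nf

lemma arg_aux (t : ℝ) : Complex.arg (1 + Complex.I * t) = Real.arctan t := by
  rw [Complex.arg_of_re_nonneg (by norm_num), abs_aux, Real.arctan_eq_arcsin]
  norm_num

lemma arg_aux' {t : ℝ} (ht : 0 ≤ t) :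
    Complex.arg (-1 + Complex.I * t) = π - Real.arctan t := by
  rw [Complex.arg_of_re_neg_of_im_nonneg (by norm_num) (by simpa using ht), abs_aux',
    Real.arctan_eq_arcsin]
  norm_num
  rw [neg_div, Real.arcsin_neg]
  ring

lemma re_formula {t : ℝ} (ht : 0 < t) :
    (((1:ℂ) + Complex.I*t) ^ ((3:ℂ)/2) - ((-1:ℂ) + Complex.I*t) ^ ((3:ℂ)/2)).re = Gfun t := by
  have h1 : (1:ℂ) + Complex.I*t ≠ 0 := by
    intro h
    have := congrArg Complex.re h
    simp at this
  have h2 : (-1:ℂ) + Complex.I*t ≠ 0 := by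
    intro h
    have := congrArg Complex.re h
    simp at this
  rw [Complex.sub_re, cpow_re_aux _ h1, cpow_re_aux _ h2, arg_aux, arg_aux' ht.le,
    abs_aux, abs_aux', Real.log_sqrt (by positivity)]
  have hcos : Real.cos ((π - Real.arctan t) * (3/2)) = - Real.sin (Real.arctan t * (3/2)) := by
    have h : (π - Real.arctan t) * (3/2) = (π + π/2) - Real.arctan t * (3/2) := by ring
    rw [h, Real.cos_sub, Real.cos_add, Real.sin_add]
    simp
  rw [hcos]
  unfold Gfun
  ring_nf

lemma Gfun_hasDeriv (t : ℝ) :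
    HasDerivAt Gfun
      (Real.exp (3/4 * Real.log (1 + t^2)) * (3/(2*(1+t^2))) *
        (t * (Real.cos (3/2 * Real.arctan t) + Real.sin (3/2 * Real.arctan t))
          + (Real.cos (3/2 * Real.arctan t) - Real.sin (3/2 * Real.arctan t)))) t := by
  have hu : (0:ℝ) < 1 + t^2 := by positivity
  have h1 : HasDerivAt (fun t : ℝ => 1 + t^2) (2*t) t := by
    simpa using (hasDerivAt_pow 2 t).const_add 1
  have hlog : HasDerivAt (fun t : ℝ => 3/4 * Real.log (1 + t^2)) (3/4 * (2*t/(1+t^2))) t :=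
    (h1.log hu.ne').const_mul (3/4)
  have hexp := hlog.exp
  have harc : HasDerivAt (fun t : ℝ => 3/2 * Real.arctan t) (3/2 * (1/(1+t^2))) t :=
    (Real.hasDerivAt_arctan t).const_mul (3/2)
  have hcos := harc.cos
  have hsin := harc.sin
  have H := hexp.mul (hcos.add hsin)
  convert H using 1
  · rfl
  · rfl
  · rfl
  field_simp
  simp only [Pi.add_apply]
  ring

lemma K_pos {t : ℝ} (ht : 0 < t) :
    0 < t * (Real.cos (3/2 * Real.arctan t) + Real.sin (3/2 * Real.arctan t))
        + (Real.cos (3/2 * Real.arctan t) - Real.sin (3/2 * Real.arctan t)) := by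
  set θ := Real.arctan t with hθdef
  have hθ1 : 0 < θ := by simpa [hθdef] using Real.arctan_strictMono ht
  have hθ2 : θ < π/2 := Real.arctan_lt_pi_div_two t
  have hcosθ : 0 < Real.cos θ := Real.cos_pos_of_mem_Ioo ⟨by linarith, hθ2⟩
  have htan : Real.tan θ = t := Real.tan_arctan t
  have hts : t * Real.cos θ = Real.sin θ := by
    rw [← htan, Real.tan_eq_sin_div_cos]
    field_simp
  have key : Real.cos θ * (t * (Real.cos (3/2*θ) + Real.sin (3/2*θ))
        + (Real.cos (3/2*θ) - Real.sin (3/2*θ)))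
      = Real.cos (θ/2) - Real.sin (θ/2) := by
    have e1 : Real.cos (θ/2) = Real.cos (θ - 3/2*θ) := by
      rw [show θ - 3/2*θ = -(θ/2) by ring, Real.cos_neg]
    have e2 : Real.sin (θ/2) = - Real.sin (θ - 3/2*θ) := by
      rw [show θ - 3/2*θ = -(θ/2) by ring, Real.sin_neg]
      ring
    rw [e1, e2, Real.cos_sub, Real.sin_sub]
    linear_combination (Real.cos (3/2*θ) + Real.sin (3/2*θ)) * hts
  have hlt : Real.sin (θ/2) < Real.cos (θ/2) := by
    rw [← Real.sin_pi_div_two_sub]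
    exact Real.sin_lt_sin_of_lt_of_le_pi_div_two (by linarith) (by linarith) (by linarith)
  nlinarith [key, hcosθ, hlt]

lemma Gfun_mono : StrictMonoOn Gfun (Set.Ici (0:ℝ)) := by
  apply strictMonoOn_of_deriv_pos (convex_Ici 0)
  · exact fun t _ => (Gfun_hasDeriv t).continuousAt.continuousWithinAt
  · intro t ht
    rw [interior_Ici] at ht
    rw [(Gfun_hasDeriv t).deriv]
    have hK := K_pos ht
    have hu : (0:ℝ) < 1 + t^2 := by positivity
    exact mul_pos (mul_pos (Real.exp_pos _) (by positivity)) hK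

/-- For fixed `k > 0` and integer `m ≥ 1`, the quantization equation
`(2k/3)e^{iπ/4}[(1−λ)^{3/2} − (−1−λ)^{3/2}] = mπi` has at most one solution `λ` on the
ray `{−it : t > 1/√3}`. -/
theorem stmt12 (k : ℝ) (hk : 0 < k) (m : ℤ) (hm : 1 ≤ m)
    (t₁ t₂ : ℝ) (ht₁ : 1 / Real.sqrt 3 < t₁) (ht₂ : 1 / Real.sqrt 3 < t₂)
    (h₁ : (2 * (k:ℂ) / 3) * Complex.exp (Real.pi / 4 * Complex.I) *
        (((1 : ℂ) - (-Complex.I * t₁)) ^ ((3 : ℂ)/2) -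
         ((-1 : ℂ) - (-Complex.I * t₁)) ^ ((3 : ℂ)/2)) = (m : ℂ) * Real.pi * Complex.I)
    (h₂ : (2 * (k:ℂ) / 3) * Complex.exp (Real.pi / 4 * Complex.I) *
        (((1 : ℂ) - (-Complex.I * t₂)) ^ ((3 : ℂ)/2) -
         ((-1 : ℂ) - (-Complex.I * t₂)) ^ ((3 : ℂ)/2)) = (m : ℂ) * Real.pi * Complex.I) :
    t₁ = t₂ := by
  have hs3 : (0:ℝ) < 1 / Real.sqrt 3 := by positivity
  have ht₁0 : 0 < t₁ := hs3.trans ht₁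
  have ht₂0 : 0 < t₂ := hs3.trans ht₂
  have hc : (2 * (k:ℂ) / 3) * Complex.exp (Real.pi / 4 * Complex.I) ≠ 0 := by
    apply mul_ne_zero
    · have hk' : (k:ℂ) ≠ 0 := by exact_mod_cast hk.ne'
      simp [hk']
    · exact Complex.exp_ne_zero _
  have hEq :
      (((1 : ℂ) - (-Complex.I * t₁)) ^ ((3 : ℂ)/2) -
         ((-1 : ℂ) - (-Complex.I * t₁)) ^ ((3 : ℂ)/2))
      = (((1 : ℂ) - (-Complex.I * t₂)) ^ ((3 : ℂ)/2) -
         ((-1 : ℂ) - (-Complex.I * t₂)) ^ ((3 : ℂ)/2)) :=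
    mul_left_cancel₀ hc (h₁.trans h₂.symm)
  have e₁ : ∀ t : ℝ, (1:ℂ) - (-Complex.I * t) = 1 + Complex.I * t := fun t => by ring
  have e₂ : ∀ t : ℝ, (-1:ℂ) - (-Complex.I * t) = -1 + Complex.I * t := fun t => by ring
  rw [e₁ t₁, e₂ t₁, e₁ t₂, e₂ t₂] at hEq
  have hre := congrArg Complex.re hEq
  rw [re_formula ht₁0, re_formula ht₂0] at hre
  exact Gfun_mono.injOn ht₁0.le ht₂0.le hre
end

section
/- For λ = −it with t > 0, the quantity Im ∫_{−1}^{1} √(i(ζ + it)) dζ is a strictly monotone continuous function of t that tends to infinity as t → ∞. -/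
open Complex Real Filter

lemma stmt13_sqrt_quadrant {z : ℂ} (hz : 0 < z.im) :
    0 < (z ^ ((1:ℂ)/2)).re ∧ 0 < (z ^ ((1:ℂ)/2)).im ∧ (z ^ ((1:ℂ)/2)) ^ 2 = z := by
  have hz0 : z ≠ 0 := fun h => by simp [h] at hz
  have harg0 : 0 < z.arg := by
    rcases (Complex.arg_nonneg_iff.mpr hz.le).lt_or_eq with h | h
    · exact h
    · exact absurd (Complex.arg_eq_zero_iff.mp h.symm).2 hz.ne'
  have harg1 : z.arg < π := Complex.arg_lt_pi_iff.mpr (Or.inr hz.ne')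
  have hw : z ^ ((1:ℂ)/2) = Complex.exp (Complex.log z * ((1:ℂ)/2)) :=
    Complex.cpow_def_of_ne_zero hz0 _
  have hre : (Complex.log z * ((1:ℂ)/2)).re = Real.log ‖z‖ / 2 := by
    simp [Complex.mul_re, Complex.log_re, Complex.log_im]
    ring
  have him : (Complex.log z * ((1:ℂ)/2)).im = z.arg / 2 := by
    simp [Complex.mul_im, Complex.log_re, Complex.log_im]
    ring
  refine ⟨?_, ?_, ?_⟩
  · rw [hw, Complex.exp_re, hre, him]
    have : 0 < Real.cos (z.arg / 2) :=
      Real.cos_pos_of_mem_Ioo ⟨by nlinarith [Real.pi_pos], by linarith⟩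
    positivity
  · rw [hw, Complex.exp_im, hre, him]
    have : 0 < Real.sin (z.arg / 2) :=
      Real.sin_pos_of_pos_of_lt_pi (by linarith) (by nlinarith [Real.pi_pos])
    positivity
  · rw [hw, sq, ← Complex.exp_add]
    rw [show Complex.log z * ((1:ℂ)/2) + Complex.log z * ((1:ℂ)/2) = Complex.log z by ring]
    exact Complex.exp_log hz0

lemma stmt13_imexp (z : ℂ) (hz : z ≠ 0) :
    (Complex.exp ((Real.pi : ℂ) / 4 * Complex.I) * z ^ ((3:ℂ)/2)).im
      = ‖z‖ ^ ((3:ℝ)/2) * Real.sin (Real.pi/4 + 3/2 * z.arg) := by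
  rw [Complex.cpow_def_of_ne_zero hz, ← Complex.exp_add, Complex.exp_im]
  have h1 : ((Real.pi : ℂ) / 4 * Complex.I + Complex.log z * ((3:ℂ)/2)).re
      = 3/2 * Real.log ‖z‖ := by
    simp [Complex.mul_re, Complex.mul_im, Complex.log_re, Complex.log_im, Complex.div_re,
      Complex.div_im]
    ring
  have h2 : ((Real.pi : ℂ) / 4 * Complex.I + Complex.log z * ((3:ℂ)/2)).im
      = Real.pi/4 + 3/2 * z.arg := by
    simp [Complex.mul_re, Complex.mul_im, Complex.log_re, Complex.log_im, Complex.div_re,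
      Complex.div_im]
    ring
  rw [h1, h2, Real.rpow_def_of_pos (norm_pos_iff.mpr hz), mul_comm (Real.log _)]

lemma stmt13_line (t : ℝ) : HasDerivAt (fun s : ℝ => (1:ℂ) + Complex.I * s) Complex.I t := by
  have h0 : HasDerivAt (fun s : ℝ => (s : ℂ)) 1 t := by
    simpa using (hasDerivAt_id t).ofReal_comp
  simpa using (h0.const_mul Complex.I).const_add 1

lemma stmt13_line' (t : ℝ) : HasDerivAt (fun s : ℝ => (-1:ℂ) + Complex.I * s) Complex.I t := by
  have h0 : HasDerivAt (fun s : ℝ => (s : ℂ)) 1 t := by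
    simpa using (hasDerivAt_id t).ofReal_comp
  simpa using (h0.const_mul Complex.I).const_add (-1)

lemma stmt13_cpow_deriv1 {t : ℝ} (ht : 0 < t) :
    HasDerivAt (fun s : ℝ => ((1:ℂ) + Complex.I * s) ^ ((3:ℂ)/2))
      (Complex.I * ((3:ℂ)/2 * ((1:ℂ) + Complex.I * t) ^ ((1:ℂ)/2))) t := by
  have hsp : ((1:ℂ) + Complex.I * t) ∈ Complex.slitPlane :=
    Complex.mem_slitPlane_iff.mpr (Or.inl (by simp))
  have h := (Complex.hasStrictDerivAt_cpow_const (c := (3:ℂ)/2) hsp).hasDerivAt.scomp t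
    (stmt13_line t)
  have he : ((3:ℂ)/2 - 1) = (1:ℂ)/2 := by norm_num
  simpa [Function.comp_def, he, smul_eq_mul] using h

lemma stmt13_cpow_deriv2 {t : ℝ} (ht : 0 < t) :
    HasDerivAt (fun s : ℝ => ((-1:ℂ) + Complex.I * s) ^ ((3:ℂ)/2))
      (Complex.I * ((3:ℂ)/2 * ((-1:ℂ) + Complex.I * t) ^ ((1:ℂ)/2))) t := by
  have hsp : ((-1:ℂ) + Complex.I * t) ∈ Complex.slitPlane :=
    Complex.mem_slitPlane_iff.mpr (Or.inr (by simp [ht.ne']))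
  have h := (Complex.hasStrictDerivAt_cpow_const (c := (3:ℂ)/2) hsp).hasDerivAt.scomp t
    (stmt13_line' t)
  have he : ((3:ℂ)/2 - 1) = (1:ℂ)/2 := by norm_num
  simpa [Function.comp_def, he, smul_eq_mul] using h

noncomputable def stmt13D (t : ℝ) : ℝ :=
  ((2/3 : ℂ) * Complex.exp (Real.pi / 4 * Complex.I) *
    (Complex.I * ((3:ℂ)/2 * ((1:ℂ) + Complex.I * t) ^ ((1:ℂ)/2)) -
     Complex.I * ((3:ℂ)/2 * ((-1:ℂ) + Complex.I * t) ^ ((1:ℂ)/2)))).im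

lemma stmt13_hasDerivAt {t : ℝ} (ht : 0 < t) :
    HasDerivAt (fun t : ℝ =>
      ((2/3 : ℂ) * Complex.exp (Real.pi / 4 * Complex.I) *
        (((1 : ℂ) + Complex.I * t) ^ ((3 : ℂ)/2) -
         ((-1 : ℂ) + Complex.I * t) ^ ((3 : ℂ)/2))).im) (stmt13D t) t := by
  have hF := ((stmt13_cpow_deriv1 ht).sub (stmt13_cpow_deriv2 ht)).const_mul
      ((2/3 : ℂ) * Complex.exp (Real.pi / 4 * Complex.I))
  have h2 := Complex.imCLM.hasFDerivAt.comp_hasDerivAt (x := t) hF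
  exact h2

lemma stmt13_deriv_pos {t : ℝ} (ht : 0 < t) : 0 < stmt13D t := by
  have h1 := stmt13_sqrt_quadrant (z := (1:ℂ) + Complex.I * t) (by simpa using ht)
  have h2 := stmt13_sqrt_quadrant (z := (-1:ℂ) + Complex.I * t) (by simpa using ht)
  set w₁ := ((1:ℂ) + Complex.I * t) ^ ((1:ℂ)/2) with hw₁
  set w₂ := ((-1:ℂ) + Complex.I * t) ^ ((1:ℂ)/2) with hw₂
  obtain ⟨ha, hb, hsq1⟩ := h1
  obtain ⟨he, hd, hsq2⟩ := h2
  have hre1 : w₁.re ^ 2 - w₁.im ^ 2 = 1 := by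
    have := congrArg Complex.re hsq1
    simp [sq, Complex.mul_re] at this
    nlinarith [this]
  have hre2 : w₂.re ^ 2 - w₂.im ^ 2 = -1 := by
    have := congrArg Complex.re hsq2
    simp [sq, Complex.mul_re] at this
    nlinarith [this]
  set c := Complex.exp (Real.pi / 4 * Complex.I) with hc
  have hcc : c = Complex.exp (((Real.pi/4 : ℝ) : ℂ) * Complex.I) := by
    rw [hc]; norm_num
  have hcre : c.re = Real.sqrt 2 / 2 := by
    rw [hcc, Complex.exp_ofReal_mul_I_re, Real.cos_pi_div_four]
  have hcim : c.im = Real.sqrt 2 / 2 := by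
    rw [hcc, Complex.exp_ofReal_mul_I_im, Real.sin_pi_div_four]
  have hsplit : (2/3 : ℂ) * c *
      (Complex.I * ((3:ℂ)/2 * w₁) - Complex.I * ((3:ℂ)/2 * w₂))
      = c * Complex.I * w₁ - c * Complex.I * w₂ := by ring
  rw [stmt13D, ← hw₁, ← hw₂, ← hc, hsplit]
  simp only [Complex.sub_im, Complex.mul_im, Complex.mul_re, Complex.I_re, Complex.I_im]
  rw [hcre, hcim]
  have hs2 : 0 < Real.sqrt 2 := by positivity
  have hab : w₁.im < w₁.re := by nlinarith
  have hde : w₂.re < w₂.im := by nlinarith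
  nlinarith [mul_pos hs2 (sub_pos.mpr hab), mul_pos hs2 (sub_pos.mpr hde)]

lemma stmt13_formula {t : ℝ} (ht : 0 < t) :
    ((2/3 : ℂ) * Complex.exp (Real.pi / 4 * Complex.I) *
        (((1 : ℂ) + Complex.I * t) ^ ((3 : ℂ)/2) -
         ((-1 : ℂ) + Complex.I * t) ^ ((3 : ℂ)/2))).im
      = 4/3 * Real.sqrt (1 + t^2) ^ ((3:ℝ)/2) *
          Real.sin (Real.pi/4 + 3/2 * Real.arccos (1 / Real.sqrt (1 + t^2))) := by
  set z₁ : ℂ := (1:ℂ) + Complex.I * t with hz₁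
  set z₂ : ℂ := (-1:ℂ) + Complex.I * t with hz₂
  have him1 : z₁.im = t := by simp [hz₁]
  have him2 : z₂.im = t := by simp [hz₂]
  have hne1 : z₁ ≠ 0 := fun h => by rw [h] at him1; simp at him1; exact ht.ne' him1.symm
  have hne2 : z₂ ≠ 0 := fun h => by rw [h] at him2; simp at him2; exact ht.ne' him2.symm
  have habs1 : ‖z₁‖ = Real.sqrt (1 + t^2) := by
    rw [Complex.norm_def, Complex.normSq_apply]
    simp [hz₁]
    ring_nf
  have habs2 : ‖z₂‖ = Real.sqrt (1 + t^2) := by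
    rw [Complex.norm_def, Complex.normSq_apply]
    simp [hz₂]
    ring_nf
  set R := Real.sqrt (1 + t^2) with hR
  set θ := Real.arccos (1 / R) with hθ
  have harg1 : z₁.arg = θ := by
    rw [Complex.arg_of_im_pos (by rw [him1]; exact ht), habs1, hθ]
    norm_num [hz₁]
  have harg2 : z₂.arg = Real.pi - θ := by
    rw [Complex.arg_of_im_pos (by rw [him2]; exact ht), habs2]
    have : z₂.re / R = -(1 / R) := by simp [hz₂]; ring
    rw [this, Real.arccos_neg, hθ]
  have hsplit : (2/3 : ℂ) * Complex.exp (Real.pi / 4 * Complex.I) *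
      (z₁ ^ ((3:ℂ)/2) - z₂ ^ ((3:ℂ)/2))
      = ((2/3 : ℝ) : ℂ) * (Complex.exp ((Real.pi : ℂ) / 4 * Complex.I) * z₁ ^ ((3:ℂ)/2)
          - Complex.exp ((Real.pi : ℂ) / 4 * Complex.I) * z₂ ^ ((3:ℂ)/2)) := by
    push_cast
    ring
  rw [hsplit]
  rw [show ∀ (r : ℝ) (w : ℂ), ((r : ℂ) * w).im = r * w.im from fun r w => by
    simp [Complex.mul_im]]
  rw [Complex.sub_im, stmt13_imexp z₁ hne1, stmt13_imexp z₂ hne2, habs1, habs2, harg1, harg2]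
  rw [show Real.pi/4 + 3/2 * (Real.pi - θ) = 2 * Real.pi - (Real.pi/4 + 3/2 * θ) by ring,
    Real.sin_two_pi_sub]
  ring

lemma stmt13_lower {t : ℝ} (ht : 1 ≤ t) :
    Real.sqrt t ≤ 4/3 * Real.sqrt (1 + t^2) ^ ((3:ℝ)/2) *
        Real.sin (Real.pi/4 + 3/2 * Real.arccos (1 / Real.sqrt (1 + t^2))) := by
  have ht0 : (0:ℝ) < t := by linarith
  set R := Real.sqrt (1 + t^2) with hR
  have hRt : t ≤ R := by
    have h := Real.sqrt_le_sqrt (show t^2 ≤ 1 + t^2 by nlinarith)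
    rwa [Real.sqrt_sq ht0.le] at h
  have hR1 : 1 ≤ R := le_trans ht hRt
  have hRpos : (0:ℝ) < R := by linarith
  have hs2 : (0:ℝ) < Real.sqrt 2 := by positivity
  have hs2R : Real.sqrt 2 ≤ R := by
    rw [hR]
    exact Real.sqrt_le_sqrt (by nlinarith)
  have hinv_pos : 0 < 1 / R := by positivity
  have hinv_le : 1 / R ≤ Real.sqrt 2 / 2 := by
    rw [div_le_div_iff₀ hRpos (by norm_num)]
    nlinarith [Real.sq_sqrt (by norm_num : (0:ℝ) ≤ 2)]
  have hinv_le1 : 1 / R ≤ 1 := by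
    rw [div_le_one hRpos]; exact hR1
  set θ := Real.arccos (1 / R) with hθ
  have hθ_le : θ ≤ Real.pi / 2 := (Real.arccos_lt_pi_div_two.mpr hinv_pos).le
  have hθ_ge : Real.pi / 4 ≤ θ := by
    have h1 : Real.arccos (Real.sqrt 2 / 2) = Real.pi / 4 := by
      rw [← Real.cos_pi_div_four]
      exact Real.arccos_cos (by positivity) (by linarith [Real.pi_pos])
    rw [← h1, hθ]
    have hmem1 : (1 / R) ∈ Set.Icc (-1 : ℝ) 1 := ⟨by linarith, hinv_le1⟩
    have hmem2 : (Real.sqrt 2 / 2) ∈ Set.Icc (-1 : ℝ) 1 := by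
      constructor <;> nlinarith [Real.sq_sqrt (by norm_num : (0:ℝ) ≤ 2)]
    exact Real.strictAntiOn_arccos.antitoneOn hmem1 hmem2 hinv_le
  have hcos : Real.cos θ = 1 / R := Real.cos_arccos (by linarith) hinv_le1
  have hpi := Real.pi_pos
  have hsin_eq : Real.sin (Real.pi/4 + 3/2 * θ) = Real.sin (3/2 * (Real.pi/2 - θ)) := by
    rw [← Real.sin_pi_sub]
    congr 1
    ring
  have hu0 : 0 ≤ Real.pi/2 - θ := by linarith
  have hu1 : Real.pi/2 - θ ≤ Real.pi/4 := by linarith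
  have hmono : Real.sin (Real.pi/2 - θ) ≤ Real.sin (3/2 * (Real.pi/2 - θ)) := by
    apply Real.strictMonoOn_sin.monotoneOn
    · constructor <;> [linarith; linarith]
    · constructor <;> [linarith; linarith]
    · linarith
  have hsin_ge : 1 / R ≤ Real.sin (Real.pi/4 + 3/2 * θ) := by
    rw [hsin_eq]
    calc 1 / R = Real.cos θ := hcos.symm
      _ = Real.sin (Real.pi/2 - θ) := (Real.sin_pi_div_two_sub θ).symm
      _ ≤ _ := hmono
  have hRpow : R ^ ((3:ℝ)/2) = R ^ ((1:ℝ)/2) * R := by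
    rw [show (3:ℝ)/2 = 1/2 + 1 by norm_num, Real.rpow_add hRpos, Real.rpow_one]
  have hRpow_pos : (0:ℝ) < R ^ ((3:ℝ)/2) := Real.rpow_pos_of_pos hRpos _
  calc Real.sqrt t ≤ Real.sqrt R := Real.sqrt_le_sqrt hRt
    _ = R ^ ((1:ℝ)/2) := Real.sqrt_eq_rpow R
    _ ≤ 4/3 * R ^ ((1:ℝ)/2) := by
        have h0 : 0 < R ^ ((1:ℝ)/2) := Real.rpow_pos_of_pos hRpos _
        nlinarith
    _ = 4/3 * (R ^ ((1:ℝ)/2) * R) * (1/R) := by field_simp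
    _ = 4/3 * R ^ ((3:ℝ)/2) * (1/R) := by rw [hRpow]
    _ ≤ 4/3 * R ^ ((3:ℝ)/2) * Real.sin (Real.pi/4 + 3/2 * θ) := by
        apply mul_le_mul_of_nonneg_left hsin_ge (by positivity)

/-- For `λ = −it`, `t > 0`, the quantity
`Im ∫_{−1}^{1} √(i(ζ+it)) dζ = Im[(2/3)e^{iπ/4}((1+it)^{3/2} − (−1+it)^{3/2})]`
is a strictly monotone continuous function of `t` tending to infinity as `t → ∞`. -/
theorem stmt13 :
    let f : ℝ → ℝ := fun t =>
      ((2/3 : ℂ) * Complex.exp (Real.pi / 4 * Complex.I) *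
        (((1 : ℂ) + Complex.I * t) ^ ((3 : ℂ)/2) -
         ((-1 : ℂ) + Complex.I * t) ^ ((3 : ℂ)/2))).im
    ContinuousOn f (Set.Ioi 0) ∧
    (StrictMonoOn f (Set.Ioi 0) ∨ StrictAntiOn f (Set.Ioi 0)) ∧
    Tendsto (fun t => |f t|) atTop atTop := by
  intro f
  have hfd : ∀ t : ℝ, 0 < t → HasDerivAt f (stmt13D t) t := fun t ht => stmt13_hasDerivAt ht
  have hcont : ContinuousOn f (Set.Ioi 0) := fun t ht =>
    (hfd t ht).continuousAt.continuousWithinAt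
  refine ⟨hcont, Or.inl ?_, ?_⟩
  · apply strictMonoOn_of_deriv_pos (convex_Ioi 0) hcont
    intro x hx
    rw [interior_Ioi] at hx
    rw [(hfd x hx).deriv]
    exact stmt13_deriv_pos hx
  · apply tendsto_atTop_mono' atTop (f₁ := Real.sqrt)
    · filter_upwards [eventually_ge_atTop (1:ℝ)] with t ht
      have hform : f t = 4/3 * Real.sqrt (1 + t^2) ^ ((3:ℝ)/2) *
          Real.sin (Real.pi/4 + 3/2 * Real.arccos (1 / Real.sqrt (1 + t^2))) :=
        stmt13_formula (by linarith)
      calc Real.sqrt t ≤ f t := by rw [hform]; exact stmt13_lower ht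
        _ ≤ |f t| := le_abs_self _
    · have h : Tendsto (fun x : ℝ => x ^ ((1:ℝ)/2)) atTop atTop :=
        tendsto_rpow_atTop (by norm_num)
      exact h.congr (fun x => (Real.sqrt_eq_rpow x).symm)
end
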